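/- arXiv:1610.10078 — 4 statements merged into one kernel-verified Lean document; each statement's English description precedes it below -/
import Mathlib

section
/- Fix an integer n ≥ 2, γ > 0 with γ ≠ 1, a rate r > 0, and a survival function t ↦ ₜp_x : [0,∞) → (0,1] which is continuous, strictly decreasing, with ₀p_x = 1 and ₜp_x → 0 as t → ∞. Then the utility of the optimal tontine is strictly less than the utility of the actuarially fair life annuity: (1/(1−γ)) · (∫_0^∞ e^{−rt} β_{n,γ}(ₜp_x)^{1/γ} dt)^γ < (1/(1−γ)) · (∫_0^∞ e^{−rt} ₜp_x dt)^γ. -/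
open MeasureTheory Real Finset

/-- `theta n γ p = E[(n/N(p))^{1-γ}]` where `N(p)-1 ~ Bin(n-1,p)`. -/
noncomputable def theta (n : ℕ) (γ p : ℝ) : ℝ :=
  ∑ k ∈ Finset.range n,
    ((n - 1).choose k : ℝ) * p ^ k * (1 - p) ^ (n - 1 - k) *
      ((n : ℝ) / ((k : ℝ) + 1)) ^ (1 - γ)

/-- `beta n γ p = p * theta n γ p`. -/
noncomputable def beta (n : ℕ) (γ p : ℝ) : ℝ := p * theta n γ p

/-- Optimal tontine payout function. -/
noncomputable def Dopt (n : ℕ) (γ r : ℝ) (p : ℝ → ℝ) (t : ℝ) : ℝ :=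
  beta n γ (p t) ^ (1 / γ) /
    ∫ s in Set.Ioi (0 : ℝ), Real.exp (-r * s) * beta n γ (p s) ^ (1 / γ)

/-- Cumulative discounted payout of the optimal tontine. -/
noncomputable def Delta (n : ℕ) (γ r : ℝ) (p : ℝ → ℝ) (t : ℝ) : ℝ :=
  ∫ s in (0 : ℝ)..t, Real.exp (-r * s) * Dopt n γ r p s

lemma convexOn_rpow_neg {s : ℝ} (hs : s < 0) :
    ConvexOn ℝ (Set.Ioi (0:ℝ)) fun x : ℝ => x ^ s := by
  have hint : interior (Set.Ioi (0:ℝ)) = Set.Ioi 0 := interior_Ioi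
  refine convexOn_of_hasDerivWithinAt2_nonneg (f' := fun x => s * x ^ (s-1))
    (f'' := fun x => s * ((s-1) * x ^ (s-2))) (convex_Ioi 0) ?_ ?_ ?_ ?_
  · intro x hx
    exact (Real.continuousAt_rpow_const x s (Or.inl (ne_of_gt hx))).continuousWithinAt
  · intro x hx
    rw [hint] at hx ⊢
    exact (Real.hasDerivAt_rpow_const (Or.inl (ne_of_gt hx))).hasDerivWithinAt
  · intro x hx
    rw [hint] at hx ⊢
    have := ((Real.hasDerivAt_rpow_const (p := s - 1)
      (Or.inl (ne_of_gt hx))).const_mul s).hasDerivWithinAt (s := Set.Ioi 0)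
    have he : s - 1 - 1 = s - 2 := by ring
    rw [he] at this
    exact this
  · intro x hx
    rw [hint] at hx
    have h1 : (0:ℝ) < x ^ (s-2) := Real.rpow_pos_of_pos hx _
    have h2 : (0:ℝ) < s * (s-1) := mul_pos_of_neg_of_neg hs (by linarith)
    show (0:ℝ) ≤ s * ((s-1) * x ^ (s-2))
    nlinarith

lemma weight_sum (m : ℕ) (q : ℝ) :
    ∑ k ∈ range (m+1), (m.choose k : ℝ) * q ^ k * (1-q) ^ (m-k) = 1 := by
  have h := add_pow q (1-q) m
  simp only [add_sub_cancel, one_pow] at h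
  calc ∑ k ∈ range (m+1), (m.choose k : ℝ) * q ^ k * (1-q) ^ (m-k)
      = ∑ k ∈ range (m+1), q ^ k * (1-q) ^ (m-k) * (m.choose k : ℝ) :=
        Finset.sum_congr rfl fun k _ => by ring
    _ = 1 := h.symm

lemma mean_sum (m : ℕ) (q : ℝ) :
    ∑ k ∈ range (m+1), (m.choose k : ℝ) * q ^ k * (1-q) ^ (m-k) *
      (((m:ℝ)+1) / ((k:ℝ)+1)) * q = 1 - (1-q) ^ (m+1) := by
  have key : ∀ k ∈ range (m+1),
      (m.choose k : ℝ) * q ^ k * (1-q) ^ (m-k) * (((m:ℝ)+1) / ((k:ℝ)+1)) * q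
        = ((m+1).choose (k+1) : ℝ) * q ^ (k+1) * (1-q) ^ ((m+1)-(k+1)) := by
    intro k hk
    have hc : ((m:ℝ)+1) * (m.choose k : ℝ) = ((m+1).choose (k+1) : ℝ) * ((k:ℝ)+1) := by
      exact_mod_cast congrArg (Nat.cast : ℕ → ℝ) (Nat.add_one_mul_choose_eq m k)
    have hk1 : ((k:ℝ)+1) ≠ 0 := by positivity
    have hmk : (m+1)-(k+1) = m - k := by omega
    rw [hmk, pow_succ]
    field_simp
    linear_combination q ^ k * (1 - q) ^ (m - k) * q * hc
  rw [Finset.sum_congr rfl key]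
  have h2 := weight_sum (m+1) q
  rw [Finset.sum_range_succ'] at h2
  simp only [Nat.choose_zero_right, Nat.cast_one, pow_zero, Nat.sub_zero, one_mul, mul_one] at h2
  linarith [h2]

lemma sum_w_mul_x (m : ℕ) {q : ℝ} (hq0 : 0 < q) :
    ∑ k ∈ range (m+1), ((m.choose k : ℝ) * q ^ k * (1-q) ^ (m-k)) * (((m:ℝ)+1) / ((k:ℝ)+1))
      = (1 - (1-q)^(m+1)) / q := by
  rw [eq_div_iff (ne_of_gt hq0), Finset.sum_mul]
  exact mean_sum m q

lemma theta_eq (m : ℕ) (γ q : ℝ) :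
    theta (m+1) γ q = ∑ k ∈ range (m+1),
      ((m.choose k : ℝ) * q ^ k * (1-q) ^ (m-k)) * ((((m:ℝ)+1) / ((k:ℝ)+1)) ^ (1-γ)) := by
  unfold theta
  refine Finset.sum_congr rfl fun k _ => ?_
  simp only [Nat.add_sub_cancel]
  push_cast
  ring

lemma theta_nonneg (m : ℕ) (γ : ℝ) {q : ℝ} (hq0 : 0 ≤ q) (hq1 : q ≤ 1) :
    0 ≤ theta (m+1) γ q := by
  rw [theta_eq]
  refine Finset.sum_nonneg fun k _ => ?_
  have : (0:ℝ) ≤ 1 - q := by linarith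
  positivity

lemma theta_le_of_lt_one (m : ℕ) {γ q : ℝ} (hγ0 : 0 < γ) (hγ : γ < 1) (hq0 : 0 < q)
    (hq1 : q ≤ 1) :
    theta (m+1) γ q ≤ ((1 - (1-q)^(m+1)) / q) ^ (1-γ) := by
  have hcc : ConcaveOn ℝ (Set.Ici (0:ℝ)) fun x : ℝ => x ^ (1-γ) :=
    Real.concaveOn_rpow (by linarith) (by linarith)
  have h1q : (0:ℝ) ≤ 1 - q := by linarith
  have h := hcc.le_map_sum (t := range (m+1))
    (w := fun k => (m.choose k : ℝ) * q ^ k * (1-q) ^ (m-k))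
    (p := fun k => ((m:ℝ)+1) / ((k:ℝ)+1))
    (fun k _ => by positivity) (weight_sum m q)
    (fun k _ => Set.mem_Ici.mpr (le_of_lt (by positivity)))
  simp only [smul_eq_mul] at h
  rw [sum_w_mul_x m hq0] at h
  rw [theta_eq]
  exact h

lemma le_theta_of_one_lt (m : ℕ) {γ q : ℝ} (hγ : 1 < γ) (hq0 : 0 < q) (hq1 : q ≤ 1) :
    ((1 - (1-q)^(m+1)) / q) ^ (1-γ) ≤ theta (m+1) γ q := by
  have hcv : ConvexOn ℝ (Set.Ioi (0:ℝ)) fun x : ℝ => x ^ (1-γ) :=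
    convexOn_rpow_neg (by linarith)
  have h := hcv.map_sum_le (t := range (m+1))
    (w := fun k => (m.choose k : ℝ) * q ^ k * (1-q) ^ (m-k))
    (p := fun k => ((m:ℝ)+1) / ((k:ℝ)+1))
    (fun k _ => by
      have h1q : (0:ℝ) ≤ 1 - q := by linarith
      positivity) (weight_sum m q)
    (fun k _ => by
      show (0:ℝ) < _
      positivity)
  simp only [smul_eq_mul] at h
  rw [sum_w_mul_x m hq0] at h
  rw [theta_eq]
  exact h

lemma q_rpow_split {γ q : ℝ} (hq0 : 0 < q) : q * q ^ (γ-1) = q ^ γ := by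
  have h := Real.rpow_add hq0 1 (γ-1)
  rw [Real.rpow_one] at h
  rw [← h]
  congr 1
  ring

lemma inv_rpow_eq {γ q : ℝ} (hq0 : 0 < q) : (q⁻¹ : ℝ) ^ (1-γ) = q ^ (γ-1) := by
  rw [Real.inv_rpow hq0.le, ← Real.rpow_neg hq0.le, neg_sub]

lemma M_lt (m : ℕ) {q : ℝ} (hq0 : 0 < q) (hq1 : q < 1) :
    (1 - (1-q)^(m+1)) / q < q⁻¹ := by
  have h1q : (0:ℝ) < 1 - q := by linarith
  have h : (0:ℝ) < (1-q)^(m+1) := by positivity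
  rw [← one_div q, div_lt_div_iff₀ hq0 hq0]
  nlinarith

lemma M_pos (m : ℕ) {q : ℝ} (hq0 : 0 < q) (hq1 : q ≤ 1) :
    0 < (1 - (1-q)^(m+1)) / q := by
  have h : (1-q)^(m+1) < 1 := by
    apply pow_lt_one₀ (by linarith) (by linarith) (Nat.succ_ne_zero m)
  have : (0:ℝ) < 1 - (1-q)^(m+1) := by linarith
  positivity

lemma M_le (m : ℕ) {q : ℝ} (hq0 : 0 < q) (hq1 : q ≤ 1) :
    (1 - (1-q)^(m+1)) / q ≤ q⁻¹ := by
  have h1q : (0:ℝ) ≤ 1 - q := by linarith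
  have h : (0:ℝ) ≤ (1-q)^(m+1) := by positivity
  rw [← one_div q, div_le_div_iff₀ hq0 hq0]
  nlinarith

lemma beta_lt_of_lt_one (m : ℕ) {γ q : ℝ} (hγ0 : 0 < γ) (hγ : γ < 1) (hq0 : 0 < q)
    (hq1 : q < 1) : beta (m+1) γ q < q ^ γ := by
  have h1 := theta_le_of_lt_one m hγ0 hγ hq0 hq1.le
  have h2 : ((1 - (1-q)^(m+1)) / q) ^ (1-γ) < (q⁻¹ : ℝ) ^ (1-γ) :=
    Real.rpow_lt_rpow (M_pos m hq0 hq1.le).le (M_lt m hq0 hq1) (by linarith)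
  have h3 : theta (m+1) γ q < q ^ (γ-1) := by
    rw [← inv_rpow_eq hq0]
    exact lt_of_le_of_lt h1 h2
  calc beta (m+1) γ q = q * theta (m+1) γ q := rfl
    _ < q * q ^ (γ-1) := by exact mul_lt_mul_of_pos_left h3 hq0
    _ = q ^ γ := q_rpow_split hq0

lemma beta_le_of_lt_one (m : ℕ) {γ q : ℝ} (hγ0 : 0 < γ) (hγ : γ < 1) (hq0 : 0 < q)
    (hq1 : q ≤ 1) : beta (m+1) γ q ≤ q ^ γ := by
  have h1 := theta_le_of_lt_one m hγ0 hγ hq0 hq1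
  have h2 : ((1 - (1-q)^(m+1)) / q) ^ (1-γ) ≤ (q⁻¹ : ℝ) ^ (1-γ) :=
    Real.rpow_le_rpow (M_pos m hq0 hq1).le (M_le m hq0 hq1) (by linarith)
  have h3 : theta (m+1) γ q ≤ q ^ (γ-1) := by
    rw [← inv_rpow_eq hq0]
    exact le_trans h1 h2
  calc beta (m+1) γ q = q * theta (m+1) γ q := rfl
    _ ≤ q * q ^ (γ-1) := by exact mul_le_mul_of_nonneg_left h3 hq0.le
    _ = q ^ γ := q_rpow_split hq0

lemma lt_beta_of_one_lt (m : ℕ) {γ q : ℝ} (hγ : 1 < γ) (hq0 : 0 < q)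
    (hq1 : q < 1) : q ^ γ < beta (m+1) γ q := by
  have h1 := le_theta_of_one_lt m hγ hq0 hq1.le
  have h2 : (q⁻¹ : ℝ) ^ (1-γ) < ((1 - (1-q)^(m+1)) / q) ^ (1-γ) :=
    Real.rpow_lt_rpow_of_neg (M_pos m hq0 hq1.le) (M_lt m hq0 hq1) (by linarith)
  have h3 : q ^ (γ-1) < theta (m+1) γ q := by
    rw [← inv_rpow_eq hq0]
    exact lt_of_lt_of_le h2 h1
  calc q ^ γ = q * q ^ (γ-1) := (q_rpow_split hq0).symm
    _ < q * theta (m+1) γ q := by exact mul_lt_mul_of_pos_left h3 hq0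
    _ = beta (m+1) γ q := rfl

lemma theta_le_one_of_one_lt (m : ℕ) {γ q : ℝ} (hγ : 1 < γ) (hq0 : 0 ≤ q)
    (hq1 : q ≤ 1) : theta (m+1) γ q ≤ 1 := by
  rw [theta_eq]
  calc ∑ k ∈ range (m+1),
        ((m.choose k : ℝ) * q ^ k * (1-q) ^ (m-k)) * ((((m:ℝ)+1) / ((k:ℝ)+1)) ^ (1-γ))
      ≤ ∑ k ∈ range (m+1), ((m.choose k : ℝ) * q ^ k * (1-q) ^ (m-k)) * 1 := by
        refine Finset.sum_le_sum fun k hk => ?_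
        have h1q : (0:ℝ) ≤ 1 - q := by linarith
        have hw : (0:ℝ) ≤ (m.choose k : ℝ) * q ^ k * (1-q) ^ (m-k) := by positivity
        refine mul_le_mul_of_nonneg_left ?_ hw
        apply Real.rpow_le_one_of_one_le_of_nonpos _ (by linarith)
        rw [le_div_iff₀ (by positivity)]
        have hk' : k ≤ m := by simpa using Nat.lt_succ_iff.mp (Finset.mem_range.mp hk)
        have : (k:ℝ) ≤ (m:ℝ) := Nat.cast_le.mpr hk'
        linarith
    _ = 1 := by
        simp only [mul_one]
        exact weight_sum m q

lemma beta_nonneg (m : ℕ) (γ : ℝ) {q : ℝ} (hq0 : 0 ≤ q) (hq1 : q ≤ 1) :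
    0 ≤ beta (m+1) γ q := mul_nonneg hq0 (theta_nonneg m γ hq0 hq1)

lemma beta_le_one (m : ℕ) {γ q : ℝ} (hγ0 : 0 < γ) (hγ1 : γ ≠ 1) (hq0 : 0 < q)
    (hq1 : q ≤ 1) : beta (m+1) γ q ≤ 1 := by
  rcases lt_or_gt_of_ne hγ1 with h | h
  · exact le_trans (beta_le_of_lt_one m hγ0 h hq0 hq1) (Real.rpow_le_one hq0.le hq1 hγ0.le)
  · calc beta (m+1) γ q = q * theta (m+1) γ q := rfl
      _ ≤ 1 * 1 := by
          exact mul_le_mul hq1 (theta_le_one_of_one_lt m h hq0.le hq1)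
            (theta_nonneg m γ hq0.le hq1) zero_le_one
      _ = 1 := mul_one 1

lemma continuous_theta (n : ℕ) (γ : ℝ) : Continuous fun q : ℝ => theta n γ q := by
  unfold theta
  refine continuous_finset_sum _ fun k _ => ?_
  exact (((continuous_const.mul (continuous_pow k)).mul
    ((continuous_const.sub continuous_id).pow _)).mul continuous_const)


/-- for `γ ≠ 1`, the utility of the optimal tontine is strictly less than
the utility of the actuarially fair life annuity. -/
theorem tontine_utility_lt_annuity_utility
    (n : ℕ) (hn : 2 ≤ n) (γ : ℝ) (hγ : 0 < γ) (hγ1 : γ ≠ 1)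
    (r : ℝ) (hr : 0 < r)
    (p : ℝ → ℝ) (hcont : Continuous p) (hanti : StrictAntiOn p (Set.Ici 0))
    (hmem : ∀ t, 0 ≤ t → p t ∈ Set.Ioc (0 : ℝ) 1) (hp0 : p 0 = 1)
    (hlim : Filter.Tendsto p Filter.atTop (nhds 0)) :
    (1 / (1 - γ)) *
        (∫ t in Set.Ioi (0 : ℝ), Real.exp (-r * t) * beta n γ (p t) ^ (1 / γ)) ^ γ <
      (1 / (1 - γ)) * (∫ t in Set.Ioi (0 : ℝ), Real.exp (-r * t) * p t) ^ γ := by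
  obtain ⟨m, rfl⟩ : ∃ m, n = m + 1 := ⟨n - 1, by omega⟩
  set f : ℝ → ℝ := fun t => Real.exp (-r * t) * beta (m+1) γ (p t) ^ (1 / γ) with hf
  set g : ℝ → ℝ := fun t => Real.exp (-r * t) * p t with hg
  -- basic facts about p on (0, ∞)
  have hpt : ∀ t : ℝ, t ∈ Set.Ioi (0:ℝ) → 0 < p t ∧ p t < 1 := by
    intro t ht
    have ht' : (0:ℝ) < t := ht
    refine ⟨(hmem t ht'.le).1, ?_⟩
    have := hanti (Set.self_mem_Ici) (Set.mem_Ici.mpr ht'.le) ht'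
    rwa [hp0] at this
  -- continuity
  have hfc : Continuous f := by
    have hb : Continuous fun t => beta (m+1) γ (p t) := by
      unfold beta
      exact hcont.mul ((continuous_theta (m+1) γ).comp hcont)
    exact (Continuous.mul (by fun_prop) (hb.rpow_const fun x => Or.inr (by positivity)))
  have hgc : Continuous g := by fun_prop
  -- bounds 0 ≤ f t ≤ exp(-r t), 0 ≤ g t ≤ exp(-r t) on Ioi 0
  have hfb : ∀ t ∈ Set.Ioi (0:ℝ), 0 ≤ f t ∧ f t ≤ Real.exp (-r * t) := by
    intro t ht
    have h1 := (hmem t (le_of_lt ht)).1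
    have h2 := (hmem t (le_of_lt ht)).2
    have hb0 : 0 ≤ beta (m+1) γ (p t) := beta_nonneg m γ h1.le h2
    have hb1 : beta (m+1) γ (p t) ≤ 1 := beta_le_one m hγ hγ1 h1 h2
    constructor
    · have : 0 ≤ beta (m+1) γ (p t) ^ (1/γ) := Real.rpow_nonneg hb0 _
      positivity
    · have : beta (m+1) γ (p t) ^ (1/γ) ≤ 1 := Real.rpow_le_one hb0 hb1 (by positivity)
      calc f t ≤ Real.exp (-r * t) * 1 :=
            mul_le_mul_of_nonneg_left this (Real.exp_nonneg _)
        _ = Real.exp (-r * t) := mul_one _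
  have hgb : ∀ t ∈ Set.Ioi (0:ℝ), 0 ≤ g t ∧ g t ≤ Real.exp (-r * t) := by
    intro t ht
    have h1 := (hmem t (le_of_lt ht)).1
    have h2 := (hmem t (le_of_lt ht)).2
    exact ⟨mul_nonneg (Real.exp_nonneg _) h1.le, by
      calc g t ≤ Real.exp (-r * t) * 1 := mul_le_mul_of_nonneg_left h2 (Real.exp_nonneg _)
        _ = Real.exp (-r * t) := mul_one _⟩
  -- integrability
  have hexp : IntegrableOn (fun t => Real.exp (-r * t)) (Set.Ioi (0:ℝ)) :=
    exp_neg_integrableOn_Ioi 0 hr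
  have hfi : IntegrableOn f (Set.Ioi (0:ℝ)) := by
    refine Integrable.mono hexp hfc.aestronglyMeasurable.restrict ?_
    rw [ae_restrict_iff' measurableSet_Ioi]
    filter_upwards with t ht
    obtain ⟨h0, h1⟩ := hfb t ht
    rw [Real.norm_eq_abs, Real.norm_eq_abs, abs_of_nonneg h0,
      abs_of_nonneg (Real.exp_nonneg _)]
    exact h1
  have hgi : IntegrableOn g (Set.Ioi (0:ℝ)) := by
    refine Integrable.mono hexp hgc.aestronglyMeasurable.restrict ?_
    rw [ae_restrict_iff' measurableSet_Ioi]
    filter_upwards with t ht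
    obtain ⟨h0, h1⟩ := hgb t ht
    rw [Real.norm_eq_abs, Real.norm_eq_abs, abs_of_nonneg h0,
      abs_of_nonneg (Real.exp_nonneg _)]
    exact h1
  set A := ∫ t in Set.Ioi (0:ℝ), f t with hA
  set B := ∫ t in Set.Ioi (0:ℝ), g t with hB
  have hA0 : 0 ≤ A :=
    setIntegral_nonneg measurableSet_Ioi fun t ht => (hfb t ht).1
  have hB0 : 0 ≤ B :=
    setIntegral_nonneg measurableSet_Ioi fun t ht => (hgb t ht).1
  have hIoiPos : (0 : ENNReal) < volume (Set.Ioi (0:ℝ)) := by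
    rw [Real.volume_Ioi]
    exact ENNReal.zero_lt_top
  rcases lt_or_gt_of_ne hγ1 with hlt | hgt
  · -- γ < 1 : f < g on Ioi 0
    have hptw : ∀ t ∈ Set.Ioi (0:ℝ), f t < g t := by
      intro t ht
      obtain ⟨h1, h2⟩ := hpt t ht
      have hb := beta_lt_of_lt_one m hγ hlt h1 h2
      have hb0 : 0 ≤ beta (m+1) γ (p t) := beta_nonneg m γ h1.le h2.le
      have hkey : beta (m+1) γ (p t) ^ (1/γ) < p t := by
        have h3 : beta (m+1) γ (p t) ^ (1/γ) < ((p t) ^ γ) ^ (1/γ) :=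
          Real.rpow_lt_rpow hb0 hb (by positivity)
        rwa [← Real.rpow_mul h1.le, mul_one_div, div_self (ne_of_gt hγ),
          Real.rpow_one] at h3
      exact mul_lt_mul_of_pos_left hkey (Real.exp_pos _)
    have hAB : A < B := by
      have hpos : 0 < ∫ t in Set.Ioi (0:ℝ), (g t - f t) := by
        rw [setIntegral_pos_iff_support_of_nonneg_ae]
        · refine lt_of_lt_of_le hIoiPos (measure_mono ?_)
          intro t ht
          exact ⟨by have := hptw t ht; simp [Function.mem_support]; linarith, ht⟩
        · filter_upwards [ae_restrict_mem measurableSet_Ioi] with t ht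
          have := hptw t ht
          simp only [Pi.zero_apply]
          linarith
        · exact hgi.sub hfi
      rw [integral_sub hgi hfi] at hpos
      linarith
    have hpow : A ^ γ < B ^ γ := Real.rpow_lt_rpow hA0 hAB hγ
    have hc : 0 < 1 / (1 - γ) := by
      apply div_pos one_pos
      linarith
    exact mul_lt_mul_of_pos_left hpow hc
  · -- γ > 1 : g < f on Ioi 0
    have hptw : ∀ t ∈ Set.Ioi (0:ℝ), g t < f t := by
      intro t ht
      obtain ⟨h1, h2⟩ := hpt t ht
      have hb := lt_beta_of_one_lt m hgt h1 h2
      have hkey : p t < beta (m+1) γ (p t) ^ (1/γ) := by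
        have h3 : ((p t) ^ γ) ^ (1/γ) < beta (m+1) γ (p t) ^ (1/γ) :=
          Real.rpow_lt_rpow (Real.rpow_nonneg h1.le _) hb (by positivity)
        rwa [← Real.rpow_mul h1.le, mul_one_div, div_self (ne_of_gt hγ),
          Real.rpow_one] at h3
      exact mul_lt_mul_of_pos_left hkey (Real.exp_pos _)
    have hBA : B < A := by
      have hpos : 0 < ∫ t in Set.Ioi (0:ℝ), (f t - g t) := by
        rw [setIntegral_pos_iff_support_of_nonneg_ae]
        · refine lt_of_lt_of_le hIoiPos (measure_mono ?_)
          intro t ht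
          exact ⟨by have := hptw t ht; simp [Function.mem_support]; linarith, ht⟩
        · filter_upwards [ae_restrict_mem measurableSet_Ioi] with t ht
          have := hptw t ht
          simp only [Pi.zero_apply]
          linarith
        · exact hfi.sub hgi
      rw [integral_sub hfi hgi] at hpos
      linarith
    have hpow : B ^ γ < A ^ γ := Real.rpow_lt_rpow hB0 hBA hγ
    have hc : 1 / (1 - γ) < 0 := by
      apply div_neg_of_pos_of_neg one_pos
      linarith
    exact mul_lt_mul_of_neg_left hpow hc
end

section
/- Fix an integer n ≥ 2, a rate r > 0, and a survival function t ↦ ₜp_x : [0,∞) → (0,1] which is continuous, strictly decreasing, with ₀p_x = 1 and ₜp_x → 0 as t → ∞; set c₀ = (∫_0^∞ e^{−rt} ₜp_x dt)^{−1}. Then for logarithmic utility (γ = 1) the utility of the optimal (natural) tontine is strictly less than that of the actuarially fair annuity: ∫_0^∞ e^{−rt} ₜp_x · E[log(n c₀ ₜp_x / N(ₜp_x))] dt < ∫_0^∞ e^{−rt} ₜp_x · log(c₀) dt, where E[log(n c₀ p / N(p))] = Σ_{k=0}^{n−1} C(n−1,k) p^k (1−p)^{n−1−k} log(n c₀ p/(k+1)).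 -/
open MeasureTheory Real Finset

lemma binom_sum_one (n : ℕ) (hn : 1 ≤ n) (q : ℝ) :
    ∑ k ∈ Finset.range n, ((n - 1).choose k : ℝ) * q ^ k * (1 - q) ^ (n - 1 - k) = 1 := by
  have h := add_pow q (1 - q) (n - 1)
  have hn1 : n - 1 + 1 = n := by omega
  rw [show q + (1 - q) = 1 by ring, one_pow, hn1] at h
  have h2 : ∑ k ∈ Finset.range n, ((n - 1).choose k : ℝ) * q ^ k * (1 - q) ^ (n - 1 - k)
      = ∑ k ∈ Finset.range n, q ^ k * (1 - q) ^ (n - 1 - k) * ((n - 1).choose k : ℝ) := by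
    apply Finset.sum_congr rfl; intro k _; ring
  rw [h2, ← h]

lemma binom_sum_id (n : ℕ) (hn : 1 ≤ n) (q : ℝ) :
    ∑ k ∈ Finset.range n, ((n - 1).choose k : ℝ) * q ^ k * (1 - q) ^ (n - 1 - k) *
      ((n : ℝ) * q / ((k : ℝ) + 1)) = 1 - (1 - q) ^ n := by
  have h := add_pow q (1 - q) n
  rw [show q + (1 - q) = 1 by ring, one_pow, Finset.sum_range_succ'] at h
  simp only [pow_zero, Nat.sub_zero, Nat.choose_zero_right, Nat.cast_one, one_mul, mul_one] at h
  have h2 : ∑ k ∈ Finset.range n, ((n - 1).choose k : ℝ) * q ^ k * (1 - q) ^ (n - 1 - k) *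
      ((n : ℝ) * q / ((k : ℝ) + 1)) =
      ∑ i ∈ Finset.range n, q ^ (i + 1) * (1 - q) ^ (n - (i + 1)) * ((n).choose (i + 1) : ℝ) := by
    apply Finset.sum_congr rfl
    intro k hk
    have hc : (n : ℝ) * ((n - 1).choose k : ℝ) = ((n).choose (k + 1) : ℝ) * ((k : ℝ) + 1) := by
      have h3 := Nat.add_one_mul_choose_eq (n - 1) k
      rw [show n - 1 + 1 = n by omega] at h3
      exact_mod_cast congrArg (Nat.cast (R := ℝ)) h3
    have he : n - (k + 1) = n - 1 - k := by omega
    have hk1 : ((k : ℝ) + 1) ≠ 0 := by positivity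
    rw [he]
    field_simp
    linear_combination (q ^ (k + 1) * (1 - q) ^ (n - 1 - k)) * hc
  rw [h2]
  linarith

lemma pointwise_lt (n : ℕ) (hn : 2 ≤ n) (c₀ q : ℝ) (hc : c₀ ≠ 0) (hq : 0 < q) (hq1 : q < 1) :
    ∑ k ∈ Finset.range n, ((n - 1).choose k : ℝ) * q ^ k * (1 - q) ^ (n - 1 - k) *
      Real.log ((n : ℝ) * c₀ * q / ((k : ℝ) + 1)) < Real.log c₀ := by
  have hw : ∀ k ∈ Finset.range n, (0:ℝ) ≤ ((n - 1).choose k : ℝ) * q ^ k * (1 - q) ^ (n - 1 - k) := by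
    intro k _
    exact mul_nonneg (mul_nonneg (by positivity) (pow_nonneg hq.le k)) (pow_nonneg (by linarith) _)
  have key : ∀ k ∈ Finset.range n,
      ((n - 1).choose k : ℝ) * q ^ k * (1 - q) ^ (n - 1 - k) *
        Real.log ((n : ℝ) * c₀ * q / ((k : ℝ) + 1)) ≤
      ((n - 1).choose k : ℝ) * q ^ k * (1 - q) ^ (n - 1 - k) *
        (Real.log c₀ + ((n : ℝ) * q / ((k : ℝ) + 1) - 1)) := by
    intro k hk
    apply mul_le_mul_of_nonneg_left _ (hw k hk)
    have hx : (0:ℝ) < (n : ℝ) * q / ((k : ℝ) + 1) := by positivity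
    have hsplit : Real.log ((n : ℝ) * c₀ * q / ((k : ℝ) + 1))
        = Real.log c₀ + Real.log ((n : ℝ) * q / ((k : ℝ) + 1)) := by
      rw [show (n : ℝ) * c₀ * q / ((k : ℝ) + 1) = c₀ * ((n : ℝ) * q / ((k : ℝ) + 1)) by ring,
        Real.log_mul hc (ne_of_gt hx)]
    rw [hsplit]
    have := Real.log_le_sub_one_of_pos hx
    linarith
  calc ∑ k ∈ Finset.range n, ((n - 1).choose k : ℝ) * q ^ k * (1 - q) ^ (n - 1 - k) *
        Real.log ((n : ℝ) * c₀ * q / ((k : ℝ) + 1))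
      ≤ ∑ k ∈ Finset.range n, ((n - 1).choose k : ℝ) * q ^ k * (1 - q) ^ (n - 1 - k) *
        (Real.log c₀ + ((n : ℝ) * q / ((k : ℝ) + 1) - 1)) := Finset.sum_le_sum key
    _ = Real.log c₀ - (1 - q) ^ n := by
        have e1 : ∑ k ∈ Finset.range n, ((n - 1).choose k : ℝ) * q ^ k * (1 - q) ^ (n - 1 - k) *
            (Real.log c₀ + ((n : ℝ) * q / ((k : ℝ) + 1) - 1)) =
            (∑ k ∈ Finset.range n, ((n - 1).choose k : ℝ) * q ^ k * (1 - q) ^ (n - 1 - k)) *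
              (Real.log c₀ - 1) +
            ∑ k ∈ Finset.range n, ((n - 1).choose k : ℝ) * q ^ k * (1 - q) ^ (n - 1 - k) *
              ((n : ℝ) * q / ((k : ℝ) + 1)) := by
          rw [Finset.sum_mul, ← Finset.sum_add_distrib]
          apply Finset.sum_congr rfl; intro k _; ring
        rw [e1, binom_sum_one n (by omega) q, binom_sum_id n (by omega) q]
        ring
    _ < Real.log c₀ := by
        have : (0:ℝ) < (1 - q) ^ n := pow_pos (by linarith) n
        linarith

lemma bound_aux (n : ℕ) (c₀ q : ℝ) (hc : c₀ ≠ 0) (hq : 0 < q) (hq1 : q ≤ 1) :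
    |q * ∑ k ∈ Finset.range n, ((n - 1).choose k : ℝ) * q ^ k * (1 - q) ^ (n - 1 - k) *
        Real.log ((n : ℝ) * c₀ * q / ((k : ℝ) + 1))| ≤
      ∑ k ∈ Finset.range n, ((n - 1).choose k : ℝ) *
        (|Real.log ((n : ℝ) * c₀ / ((k : ℝ) + 1))| + 1) := by
  rw [Finset.mul_sum]
  refine (Finset.abs_sum_le_sum_abs _ _).trans (Finset.sum_le_sum ?_)
  intro k hk
  have hkn : k < n := Finset.mem_range.mp hk
  have hn0 : (0:ℝ) < (n : ℝ) := by exact_mod_cast Nat.zero_lt_of_lt hkn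
  have h1q : (0:ℝ) ≤ 1 - q := by linarith
  have hk1 : (0:ℝ) < (k : ℝ) + 1 := by positivity
  have hc' : (n : ℝ) * c₀ / ((k : ℝ) + 1) ≠ 0 := by
    apply div_ne_zero (mul_ne_zero (ne_of_gt hn0) hc) (ne_of_gt hk1)
  set C : ℝ := ((n - 1).choose k : ℝ) with hC
  have hC0 : 0 ≤ C := by positivity
  set L := Real.log ((n : ℝ) * c₀ * q / ((k : ℝ) + 1)) with hL
  have e1 : q * (C * q ^ k * (1 - q) ^ (n - 1 - k) * L)
      = (C * q ^ k * (1 - q) ^ (n - 1 - k)) * (q * L) := by ring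
  have hW0 : 0 ≤ C * q ^ k * (1 - q) ^ (n - 1 - k) :=
    mul_nonneg (mul_nonneg hC0 (pow_nonneg hq.le k)) (pow_nonneg h1q _)
  rw [e1, abs_mul, abs_of_nonneg hW0]
  have hW1 : C * q ^ k * (1 - q) ^ (n - 1 - k) ≤ C := by
    have h1 : q ^ k ≤ 1 := pow_le_one₀ hq.le hq1
    have h2 : (1 - q) ^ (n - 1 - k) ≤ 1 := pow_le_one₀ h1q (by linarith)
    have h4 := mul_le_mul_of_nonneg_left h2 (mul_nonneg hC0 (pow_nonneg hq.le k))
    have h5 := mul_le_mul_of_nonneg_left h1 hC0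
    nlinarith
  have hqL : |q * L| ≤ |Real.log ((n : ℝ) * c₀ / ((k : ℝ) + 1))| + 1 := by
    have hsplit : L = Real.log ((n : ℝ) * c₀ / ((k : ℝ) + 1)) + Real.log q := by
      rw [hL, show (n : ℝ) * c₀ * q / ((k : ℝ) + 1) = ((n : ℝ) * c₀ / ((k : ℝ) + 1)) * q by ring,
        Real.log_mul hc' (ne_of_gt hq)]
    have h3 : |Real.log q * q| < 1 := Real.abs_log_mul_self_lt q hq hq1
    calc |q * L| = |q * Real.log ((n : ℝ) * c₀ / ((k : ℝ) + 1)) + Real.log q * q| := by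
          rw [hsplit]; ring_nf
      _ ≤ |q * Real.log ((n : ℝ) * c₀ / ((k : ℝ) + 1))| + |Real.log q * q| := abs_add_le _ _
      _ ≤ |Real.log ((n : ℝ) * c₀ / ((k : ℝ) + 1))| + 1 := by
          rw [abs_mul, abs_of_pos hq]
          have := abs_nonneg (Real.log ((n : ℝ) * c₀ / ((k : ℝ) + 1)))
          nlinarith
  calc (C * q ^ k * (1 - q) ^ (n - 1 - k)) * |q * L|
      ≤ C * (|Real.log ((n : ℝ) * c₀ / ((k : ℝ) + 1))| + 1) :=
        mul_le_mul hW1 hqL (abs_nonneg _) hC0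

/-- for logarithmic utility (`γ = 1`), the utility of the natural (optimal)
tontine is strictly less than that of the actuarially fair annuity. -/
theorem log_tontine_utility_lt_annuity
    (n : ℕ) (hn : 2 ≤ n)
    (r : ℝ) (hr : 0 < r)
    (p : ℝ → ℝ) (hcont : Continuous p) (hanti : StrictAntiOn p (Set.Ici 0))
    (hmem : ∀ t, 0 ≤ t → p t ∈ Set.Ioc (0 : ℝ) 1) (hp0 : p 0 = 1)
    (hlim : Filter.Tendsto p Filter.atTop (nhds 0))
    (c₀ : ℝ) (hc₀ : c₀ = (∫ t in Set.Ioi (0 : ℝ), Real.exp (-r * t) * p t)⁻¹) :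
    ∫ t in Set.Ioi (0 : ℝ), Real.exp (-r * t) * p t *
        (∑ k ∈ Finset.range n,
          ((n - 1).choose k : ℝ) * p t ^ k * (1 - p t) ^ (n - 1 - k) *
            Real.log ((n : ℝ) * c₀ * p t / ((k : ℝ) + 1))) <
      ∫ t in Set.Ioi (0 : ℝ), Real.exp (-r * t) * p t * Real.log c₀ := by
  have hppos : ∀ t ∈ Set.Ioi (0:ℝ), 0 < p t := fun t ht => (hmem t (le_of_lt ht)).1
  have hple : ∀ t ∈ Set.Ioi (0:ℝ), p t ≤ 1 := fun t ht => (hmem t (le_of_lt ht)).2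
  have hplt : ∀ t ∈ Set.Ioi (0:ℝ), p t < 1 := by
    intro t ht
    have := hanti Set.self_mem_Ici (Set.mem_Ici.mpr (le_of_lt ht)) ht
    rwa [hp0] at this
  have hn0 : (0:ℝ) < (n : ℝ) := by exact_mod_cast (by omega : 0 < n)
  -- base integrability
  have hbase : IntegrableOn (fun t => Real.exp (-r * t) * p t) (Set.Ioi (0:ℝ)) := by
    refine Integrable.mono (exp_neg_integrableOn_Ioi 0 hr)
      ((((Real.continuous_exp.comp (continuous_const.mul continuous_id)).mul
        hcont)).aestronglyMeasurable.restrict) ?_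
    filter_upwards [ae_restrict_mem measurableSet_Ioi] with t ht
    have h1 := hppos t ht; have h2 := hple t ht
    have he : 0 < Real.exp (-r * t) := Real.exp_pos _
    rw [Real.norm_eq_abs, Real.norm_eq_abs, abs_of_pos (by positivity), abs_of_pos he]
    nlinarith
  -- positivity of the annuity price integral
  have hIpos : 0 < ∫ t in Set.Ioi (0:ℝ), Real.exp (-r * t) * p t := by
    rw [setIntegral_pos_iff_support_of_nonneg_ae ?_ hbase]
    · refine lt_of_lt_of_le ?_ (measure_mono (s := Set.Ioi (0:ℝ)) ?_)
      · rw [Real.volume_Ioi]; exact ENNReal.zero_lt_top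
      · intro t ht
        exact ⟨ne_of_gt (mul_pos (Real.exp_pos _) (hppos t ht)), ht⟩
    · filter_upwards [ae_restrict_mem measurableSet_Ioi] with t ht
      exact le_of_lt (mul_pos (Real.exp_pos _) (hppos t ht))
  have hc₀pos : 0 < c₀ := by rw [hc₀]; exact inv_pos.mpr hIpos
  have hc0ne : c₀ ≠ 0 := ne_of_gt hc₀pos
  -- abbreviations
  set S : ℝ → ℝ := fun t => ∑ k ∈ Finset.range n,
      ((n - 1).choose k : ℝ) * p t ^ k * (1 - p t) ^ (n - 1 - k) *
        Real.log ((n : ℝ) * c₀ * p t / ((k : ℝ) + 1)) with hS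
  set M : ℝ := ∑ k ∈ Finset.range n, ((n - 1).choose k : ℝ) *
      (|Real.log ((n : ℝ) * c₀ / ((k : ℝ) + 1))| + 1) with hM
  have hMnn : 0 ≤ M := Finset.sum_nonneg fun k _ => by positivity
  -- integrability of the tontine utility integrand
  have hF : IntegrableOn (fun t => Real.exp (-r * t) * p t * S t) (Set.Ioi (0:ℝ)) := by
    refine Integrable.mono ((exp_neg_integrableOn_Ioi 0 hr).mul_const M) ?_ ?_
    · apply ContinuousOn.aestronglyMeasurable _ measurableSet_Ioi
      apply ContinuousOn.mul
      · exact ((Real.continuous_exp.comp (continuous_const.mul continuous_id)).mul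
          hcont).continuousOn
      · apply continuousOn_finset_sum
        intro k _
        refine ContinuousOn.mul ?_ (ContinuousOn.log ?_ ?_)
        · exact ((continuousOn_const.mul (hcont.continuousOn.pow k)).mul
            (((continuous_const.sub hcont).continuousOn).pow _))
        · exact ((continuous_const.mul hcont).div_const _).continuousOn
        · intro t ht
          have := hppos t ht
          have hk1 : (0:ℝ) < (k:ℝ) + 1 := by positivity
          exact ne_of_gt (div_pos (mul_pos (mul_pos hn0 hc₀pos) this) hk1)
    · filter_upwards [ae_restrict_mem measurableSet_Ioi] with t ht
      have h1 := hppos t ht; have h2 := hple t ht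
      have he : 0 < Real.exp (-r * t) := Real.exp_pos _
      have hb := bound_aux n c₀ (p t) hc0ne h1 h2
      calc ‖Real.exp (-r * t) * p t * S t‖
          = Real.exp (-r * t) * |p t * S t| := by
            rw [mul_assoc, Real.norm_eq_abs, abs_mul, abs_of_pos he]
        _ ≤ Real.exp (-r * t) * M := mul_le_mul_of_nonneg_left hb he.le
        _ ≤ ‖Real.exp (-r * t) * M‖ := le_abs_self _
  have hG : IntegrableOn (fun t => Real.exp (-r * t) * p t * Real.log c₀) (Set.Ioi (0:ℝ)) :=
    hbase.mul_const _
  -- pointwise strict inequality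
  have hlt : ∀ t ∈ Set.Ioi (0:ℝ), Real.exp (-r * t) * p t * S t <
      Real.exp (-r * t) * p t * Real.log c₀ := by
    intro t ht
    have hkey := pointwise_lt n hn c₀ (p t) hc0ne (hppos t ht) (hplt t ht)
    have hpos : 0 < Real.exp (-r * t) * p t := mul_pos (Real.exp_pos _) (hppos t ht)
    exact mul_lt_mul_of_pos_left hkey hpos
  -- conclude
  have hsubI : IntegrableOn
      (fun t => Real.exp (-r * t) * p t * Real.log c₀ - Real.exp (-r * t) * p t * S t)
      (Set.Ioi (0:ℝ)) := hG.sub hF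
  have h0 : 0 < ∫ t in Set.Ioi (0:ℝ),
      (Real.exp (-r * t) * p t * Real.log c₀ - Real.exp (-r * t) * p t * S t) := by
    rw [setIntegral_pos_iff_support_of_nonneg_ae ?_ hsubI]
    · refine lt_of_lt_of_le ?_ (measure_mono (s := Set.Ioi (0:ℝ)) ?_)
      · rw [Real.volume_Ioi]; exact ENNReal.zero_lt_top
      · intro t ht
        exact ⟨ne_of_gt (sub_pos.mpr (hlt t ht)), ht⟩
    · filter_upwards [ae_restrict_mem measurableSet_Ioi] with t ht
      exact sub_nonneg.mpr (le_of_lt (hlt t ht))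
  rw [integral_sub hG hF] at h0
  linarith
end

section
/- For every integer n ≥ 2 and every p ∈ (0,1): E[log N(p)] > log(np), i.e. Σ_{k=0}^{n−1} C(n−1,k) p^k (1−p)^{n−1−k} log(k+1) > log(np). -/
open MeasureTheory Real Finset

/-- `E[log N(p)] > log (n p)` for `0 < p < 1`. -/
theorem log_expectation_gt
    (n : ℕ) (hn : 2 ≤ n) (p : ℝ) (hp : p ∈ Set.Ioo (0 : ℝ) 1) :
    Real.log ((n : ℝ) * p) <
      ∑ k ∈ Finset.range n,
        ((n - 1).choose k : ℝ) * p ^ k * (1 - p) ^ (n - 1 - k) * Real.log ((k : ℝ) + 1) := by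
  obtain ⟨hp0, hp1⟩ := hp
  have hq0 : (0:ℝ) < 1 - p := by linarith
  have hn0 : (0:ℝ) < n := by positivity
  have hnp : (0:ℝ) < (n:ℝ) * p := by positivity
  have hn1 : n - 1 + 1 = n := Nat.sub_add_cancel (by omega)
  -- sum of weights = 1
  have hsum1 : ∑ k ∈ range n, ((n-1).choose k : ℝ) * p ^ k * (1-p) ^ (n-1-k) = 1 := by
    have h := add_pow p (1-p) (n-1)
    rw [show p + (1-p) = 1 by ring, one_pow, hn1] at h
    refine Eq.trans (Finset.sum_congr rfl fun k _ => by ring) h.symm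
  -- second identity
  have hsum2 : ∑ k ∈ range n, ((n-1).choose k : ℝ) * p ^ k * (1-p) ^ (n-1-k) * ((n:ℝ)*p/((k:ℝ)+1))
      = 1 - (1-p)^n := by
    have key : ∀ k ∈ range n,
        ((n-1).choose k : ℝ) * p ^ k * (1-p) ^ (n-1-k) * ((n:ℝ)*p/((k:ℝ)+1))
        = (n.choose (k+1) : ℝ) * p ^ (k+1) * (1-p) ^ (n-1-k) := by
      intro k hk
      have hid : n * (n-1).choose k = n.choose (k+1) * (k+1) := by
        have h0 := Nat.add_one_mul_choose_eq (n-1) k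
        simp only [Nat.succ_eq_add_one, hn1] at h0
        exact h0
      have hid' : (n:ℝ) * ((n-1).choose k : ℝ) = (n.choose (k+1) : ℝ) * ((k:ℝ)+1) := by
        exact_mod_cast hid
      have hk1 : ((k:ℝ)+1) ≠ 0 := by positivity
      rw [mul_div_assoc', div_eq_iff hk1]
      linear_combination (p ^ k * (1-p) ^ (n-1-k) * p) * hid'
    rw [Finset.sum_congr rfl key]
    have h := add_pow p (1-p) n
    rw [show p + (1-p) = 1 by ring, one_pow] at h
    rw [Finset.sum_range_succ'] at h
    simp only [pow_zero, one_mul, Nat.choose_zero_right, Nat.cast_one, Nat.sub_zero,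
      mul_one] at h
    have hS : ∑ k ∈ range n, (n.choose (k+1) : ℝ) * p ^ (k+1) * (1-p) ^ (n-1-k)
        = ∑ k ∈ range n, p ^ (k+1) * (1-p) ^ (n-(k+1)) * (n.choose (k+1) : ℝ) := by
      refine Finset.sum_congr rfl fun k hk => ?_
      have hnk : n - (k+1) = n - 1 - k := by omega
      rw [hnk]; ring
    rw [hS]
    linarith [h]
  -- per-term bound
  have hterm : ∀ k ∈ range n,
      ((n-1).choose k : ℝ) * p ^ k * (1-p) ^ (n-1-k) *
        (Real.log ((n:ℝ)*p) + 1 - (n:ℝ)*p/((k:ℝ)+1))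
      ≤ ((n-1).choose k : ℝ) * p ^ k * (1-p) ^ (n-1-k) * Real.log ((k:ℝ)+1) := by
    intro k hk
    have hw : (0:ℝ) ≤ ((n-1).choose k : ℝ) * p ^ k * (1-p) ^ (n-1-k) := by positivity
    refine mul_le_mul_of_nonneg_left ?_ hw
    have hk1 : (0:ℝ) < (k:ℝ)+1 := by positivity
    have hx : (0:ℝ) < ((k:ℝ)+1) / ((n:ℝ)*p) := by positivity
    have h1 : Real.log (((k:ℝ)+1) / ((n:ℝ)*p))⁻¹ ≤ (((k:ℝ)+1) / ((n:ℝ)*p))⁻¹ - 1 :=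
      Real.log_le_sub_one_of_pos (by positivity)
    rw [Real.log_inv] at h1
    have h2 : Real.log (((k:ℝ)+1) / ((n:ℝ)*p)) = Real.log ((k:ℝ)+1) - Real.log ((n:ℝ)*p) :=
      Real.log_div (by positivity) (ne_of_gt hnp)
    have h3 : (((k:ℝ)+1) / ((n:ℝ)*p))⁻¹ = (n:ℝ)*p/((k:ℝ)+1) := by
      field_simp
    rw [h2, h3] at h1
    linarith
  have hle := Finset.sum_le_sum hterm
  have hexpand : ∑ k ∈ range n, ((n-1).choose k : ℝ) * p ^ k * (1-p) ^ (n-1-k) *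
        (Real.log ((n:ℝ)*p) + 1 - (n:ℝ)*p/((k:ℝ)+1))
      = Real.log ((n:ℝ)*p) + (1-p)^n := by
    have : ∀ k ∈ range n, ((n-1).choose k : ℝ) * p ^ k * (1-p) ^ (n-1-k) *
        (Real.log ((n:ℝ)*p) + 1 - (n:ℝ)*p/((k:ℝ)+1))
        = ((n-1).choose k : ℝ) * p ^ k * (1-p) ^ (n-1-k) * (Real.log ((n:ℝ)*p) + 1)
          - ((n-1).choose k : ℝ) * p ^ k * (1-p) ^ (n-1-k) * ((n:ℝ)*p/((k:ℝ)+1)) := by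
      intro k hk; ring
    rw [Finset.sum_congr rfl this, Finset.sum_sub_distrib, hsum2,
      ← Finset.sum_mul, hsum1]
    ring
  have hqn : (0:ℝ) < (1-p)^n := by positivity
  calc Real.log ((n:ℝ)*p) < Real.log ((n:ℝ)*p) + (1-p)^n := by linarith
    _ = _ := hexpand.symm
    _ ≤ _ := hle
end

section
/- Fix an integer n ≥ 2, γ with 1 < γ ≤ 2, a rate r > 0, and a survival function t ↦ ₜp_x : [0,∞) → (0,1] which is continuous, strictly decreasing, with ₀p_x = 1, ₜp_x < 1 for t > 0, and ₜp_x → 0 as t → ∞. Set c₀ = (∫_0^∞ e^{−rt} ₜp_x dt)^{−1} and define the indifference loading δ by (1−δ)^{1−γ} c₀^{−γ} = (∫_0^∞ e^{−rt} β_{n,γ}(ₜp_x)^{1/γ} dt)^γ, i.e. δ = 1 − (c₀ ∫_0^∞ e^{−rt} β_{n,γ}(ₜp_x)^{1/γ} dt)^{γ/(1−γ)}. Then δ < (1/n)·(c₀/r − 1). (Note that c₀ > r, since ∫_0^∞ e^{−rt} ₜp_x dt < 1/r.) -/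
open MeasureTheory Real Finset

/-- Bernoulli inequality for negative exponents. -/
lemma bern_neg {x s : ℝ} (hx : 0 < x) (hs : s < 0) : 1 + s * (x - 1) ≤ x ^ s := by
  rcases le_or_gt (1 + s * (x - 1)) 0 with h | h
  · exact h.trans (Real.rpow_pos_of_pos hx s).le
  · set t : ℝ := -s with ht
    have ht0 : 0 < t := by simp [ht]; linarith
    have h1t : (0:ℝ) < 1 + t := by linarith
    have key : (1 + s * (x - 1)) * x ^ t ≤ 1 := by
      have hw : 1 / (1 + t) + t / (1 + t) = 1 := by field_simp
      have h2 := Real.geom_mean_le_arith_mean2_weighted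
        (by positivity : (0:ℝ) ≤ 1 / (1 + t)) (by positivity : (0:ℝ) ≤ t / (1 + t))
        h.le hx.le hw
      have hrhs : 1 / (1 + t) * (1 + s * (x - 1)) + t / (1 + t) * x = 1 := by
        rw [ht] at *
        field_simp
        ring
      rw [hrhs] at h2
      have h3 : ((1 + s * (x - 1)) ^ (1 / (1 + t)) * x ^ (t / (1 + t))) ^ (1 + t) ≤ 1 :=
        Real.rpow_le_one (by positivity) h2 h1t.le
      rwa [Real.mul_rpow (by positivity) (by positivity),
        ← Real.rpow_mul h.le, ← Real.rpow_mul hx.le,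
        div_mul_cancel₀ _ h1t.ne', div_mul_cancel₀ _ h1t.ne', Real.rpow_one] at h3
    have hxt : 0 < x ^ t := Real.rpow_pos_of_pos hx t
    have : 1 + s * (x - 1) ≤ (x ^ t)⁻¹ := by
      rw [inv_eq_one_div, le_div_iff₀ hxt]; exact key
    rwa [← Real.rpow_neg hx.le, ht, neg_neg] at this

/-- Strict two-term weighted AM–GM. -/
lemma amgm2_strict {a b w : ℝ} (ha : 0 < a) (hb : 0 < b) (hab : a ≠ b)
    (hw0 : 0 < w) (hw1 : w < 1) : a ^ w * b ^ (1 - w) < w * a + (1 - w) * b := by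
  have h := strictConcaveOn_log_Ioi.2 (Set.mem_Ioi.mpr ha) (Set.mem_Ioi.mpr hb) hab hw0
    (by linarith : (0:ℝ) < 1 - w) (by ring)
  simp only [smul_eq_mul] at h
  have h2 : a ^ w * b ^ (1 - w) = Real.exp (w * Real.log a + (1 - w) * Real.log b) := by
    rw [Real.exp_add, Real.rpow_def_of_pos ha, Real.rpow_def_of_pos hb]
    ring_nf
  have h1w : (0:ℝ) < 1 - w := by linarith
  have h3 : 0 < w * a + (1 - w) * b := by positivity
  calc a ^ w * b ^ (1 - w) = Real.exp (w * Real.log a + (1 - w) * Real.log b) := h2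
    _ < Real.exp (Real.log (w * a + (1 - w) * b)) := Real.exp_lt_exp.mpr h
    _ = w * a + (1 - w) * b := Real.exp_log h3

lemma binom_sum (m : ℕ) (x y : ℝ) :
    ∑ k ∈ Finset.range (m + 1), (m.choose k : ℝ) * x ^ k * y ^ (m - k) = (x + y) ^ m := by
  rw [add_pow]
  exact Finset.sum_congr rfl fun k _ => by ring

lemma binom_mean (m : ℕ) (x y : ℝ) :
    ∑ k ∈ Finset.range (m + 1), (m.choose k : ℝ) * x ^ k * y ^ (m - k) * (k : ℝ)
      = m * x * (x + y) ^ (m - 1) := by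
  cases m with
  | zero => simp
  | succ m =>
    rw [Finset.sum_range_succ']
    simp only [Nat.cast_zero, mul_zero, add_zero, Nat.add_sub_cancel]
    have hterm : ∀ j : ℕ, ((m + 1).choose (j + 1) : ℝ) * x ^ (j + 1) * y ^ (m + 1 - (j + 1))
        * ((j + 1 : ℕ) : ℝ) = ((m : ℝ) + 1) * x * ((m.choose j : ℝ) * x ^ j * y ^ (m - j)) := by
      intro j
      have h := Nat.add_one_mul_choose_eq m j
      have h' : (((m + 1).choose (j + 1) : ℝ)) * ((j : ℝ) + 1) = ((m : ℝ) + 1) * (m.choose j : ℝ) := by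
        exact_mod_cast congrArg (Nat.cast (R := ℝ)) h.symm
      have hy : m + 1 - (j + 1) = m - j := by omega
      have h'' : (((m + 1).choose (j + 1) : ℝ)) * ((j + 1 : ℕ) : ℝ) = ((m : ℝ) + 1) * (m.choose j : ℝ) := by
        push_cast at h' ⊢; linarith
      rw [hy, pow_succ]
      linear_combination (x ^ j * x * y ^ (m - j)) * h''
    calc ∑ j ∈ Finset.range (m + 1), ((m + 1).choose (j + 1) : ℝ) * x ^ (j + 1) * y ^ (m + 1 - (j + 1)) * ((j + 1 : ℕ) : ℝ)
        = ∑ j ∈ Finset.range (m + 1), ((m : ℝ) + 1) * x * ((m.choose j : ℝ) * x ^ j * y ^ (m - j)) :=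
          Finset.sum_congr rfl fun j _ => hterm j
      _ = ((m : ℝ) + 1) * x * (x + y) ^ m := by
          rw [← Finset.mul_sum, binom_sum]
      _ = (↑(m + 1) : ℝ) * x * (x + y) ^ m := by push_cast; ring

lemma theta_pos {n : ℕ} (hn : 1 ≤ n) (γ : ℝ) {q : ℝ} (hq0 : 0 < q) (hq1 : q ≤ 1) :
    0 < theta n γ q := by
  unfold theta
  apply Finset.sum_pos'
  · intro k hk
    have : (0:ℝ) < (n : ℝ) / ((k : ℝ) + 1) := by positivity
    have h1q : (0:ℝ) ≤ 1 - q := by linarith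
    positivity
  · refine ⟨n - 1, Finset.mem_range.mpr (by omega), ?_⟩
    have h1 : n - 1 - (n - 1) = 0 := by omega
    rw [h1, Nat.choose_self, pow_zero]
    have : (0:ℝ) < (n : ℝ) / (((n - 1 : ℕ) : ℝ) + 1) := by
      have : (0:ℝ) < (n:ℝ) := by exact_mod_cast hn
      positivity
    have := Real.rpow_pos_of_pos this (1 - γ)
    simp only [Nat.cast_one, mul_one, one_mul]
    positivity

lemma theta_le_one {n : ℕ} (hn : 1 ≤ n) {γ : ℝ} (hγ : 1 ≤ γ) {q : ℝ} (hq0 : 0 ≤ q)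
    (hq1 : q ≤ 1) : theta n γ q ≤ 1 := by
  unfold theta
  obtain ⟨m, rfl⟩ : ∃ m, n = m + 1 := ⟨n - 1, by omega⟩
  simp only [Nat.add_sub_cancel]
  calc ∑ k ∈ Finset.range (m + 1), (m.choose k : ℝ) * q ^ k * (1 - q) ^ (m - k) *
        (((m + 1 : ℕ) : ℝ) / ((k : ℝ) + 1)) ^ (1 - γ)
      ≤ ∑ k ∈ Finset.range (m + 1), (m.choose k : ℝ) * q ^ k * (1 - q) ^ (m - k) := by
        apply Finset.sum_le_sum
        intro k hk
        have hw : (0:ℝ) ≤ (m.choose k : ℝ) * q ^ k * (1 - q) ^ (m - k) := by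
          have h1q : (0:ℝ) ≤ 1 - q := by linarith
          positivity
        have hbase : (1:ℝ) ≤ ((m + 1 : ℕ) : ℝ) / ((k : ℝ) + 1) := by
          rw [le_div_iff₀ (by positivity)]
          have : k < m + 1 := Finset.mem_range.mp hk
          have : (k:ℝ) + 1 ≤ ((m+1:ℕ):ℝ) := by exact_mod_cast this
          linarith
        have := Real.rpow_le_one_of_one_le_of_nonpos hbase (by linarith : 1 - γ ≤ 0)
        nlinarith
    _ = 1 := by rw [binom_sum]; norm_num

/-- Jensen step: `theta (m+1) γ q ≤ ((m q + 1)/(m+1))^(γ-1)`. -/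
lemma theta_le_jensen (m : ℕ) {γ q : ℝ} (hγ1 : 1 < γ) (hγ2 : γ ≤ 2)
    (hq0 : 0 ≤ q) (hq1 : q ≤ 1) :
    theta (m + 1) γ q ≤ (((m : ℝ) * q + 1) / ((m : ℝ) + 1)) ^ (γ - 1) := by
  set c : ℝ := γ - 1 with hc
  have hc0 : 0 < c := by simp [hc]; linarith
  have hc1 : c ≤ 1 := by simp [hc]; linarith
  have h1q : (0:ℝ) ≤ 1 - q := by linarith
  set w : ℕ → ℝ := fun k => (m.choose k : ℝ) * q ^ k * (1 - q) ^ (m - k) with hw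
  set z : ℕ → ℝ := fun k => ((k : ℝ) + 1) / ((m : ℝ) + 1) with hz
  have hwnn : ∀ k ∈ Finset.range (m + 1), 0 ≤ w k := fun k _ => by
    simp only [hw]; positivity
  have hznn : ∀ k ∈ Finset.range (m + 1), 0 ≤ z k ^ c := fun k _ => by
    simp only [hz]; positivity
  have hwsum : ∑ k ∈ Finset.range (m + 1), w k = 1 := by
    simp only [hw]; rw [binom_sum]; norm_num
  -- rewrite theta as ∑ w k * z k ^ c
  have htheta : theta (m + 1) γ q = ∑ k ∈ Finset.range (m + 1), w k * z k ^ c := by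
    unfold theta
    simp only [Nat.add_sub_cancel]
    refine Finset.sum_congr rfl fun k _ => ?_
    have hzk : (0:ℝ) ≤ ((k:ℝ) + 1) / ((m:ℝ) + 1) := by positivity
    have : (((m + 1 : ℕ) : ℝ) / ((k : ℝ) + 1)) ^ (1 - γ)
        = (((k : ℝ) + 1) / ((m : ℝ) + 1)) ^ c := by
      have h1 : (1 : ℝ) - γ = -c := by rw [hc]; ring
      rw [h1, Real.rpow_neg (by positivity), ← Real.inv_rpow (by positivity), inv_div]
      push_cast
      try ring_nf
    rw [this]
    try simp only [hw, hz]
    try ring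
  -- mean of z
  have hzmean : ∑ k ∈ Finset.range (m + 1), w k * z k
      = ((m : ℝ) * q + 1) / ((m : ℝ) + 1) := by
    have expand : ∀ k, w k * z k = (w k * (k:ℝ) + w k) * (1 / ((m:ℝ)+1)) := by
      intro k; simp only [hz]; ring
    simp only [expand]
    rw [← Finset.sum_mul, Finset.sum_add_distrib, hwsum]
    have hmean : ∑ k ∈ Finset.range (m + 1), w k * (k : ℝ) = (m : ℝ) * q := by
      simp only [hw]
      rw [binom_mean]
      norm_num
    rw [hmean]
    ring
  rw [htheta, ← hzmean]
  -- Jensen: ∑ w (z^c) ≤ (∑ w z)^c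
  have hp : (1:ℝ) ≤ 1 / c := by rw [le_div_iff₀ hc0]; linarith
  have := Real.arith_mean_le_rpow_mean (Finset.range (m + 1)) w (fun k => z k ^ c)
    hwnn hwsum hznn hp
  calc ∑ k ∈ Finset.range (m + 1), w k * z k ^ c
      ≤ (∑ k ∈ Finset.range (m + 1), w k * (z k ^ c) ^ (1/c)) ^ (1 / (1/c)) := this
    _ = (∑ k ∈ Finset.range (m + 1), w k * z k) ^ c := by
        rw [one_div_one_div]
        congr 1
        refine Finset.sum_congr rfl fun k _ => ?_
        rw [← Real.rpow_mul (by simp only [hz]; positivity),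
          mul_one_div_cancel hc0.ne', Real.rpow_one]

/-- Key pointwise bound. -/
lemma beta_rpow_lt {n : ℕ} (hn : 2 ≤ n) {γ q : ℝ} (hγ1 : 1 < γ) (hγ2 : γ ≤ 2)
    (hq0 : 0 < q) (hq1 : q < 1) :
    beta n γ q ^ (1 / γ) < q + (γ - 1) / γ * ((1 - q) / n) := by
  obtain ⟨m, rfl⟩ : ∃ m, n = m + 1 := ⟨n - 1, by omega⟩
  have hm1 : 1 ≤ m := by omega
  have hγ0 : (0:ℝ) < γ := by linarith
  set A : ℝ := ((m : ℝ) * q + 1) / ((m : ℝ) + 1) with hA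
  have hA0 : 0 < A := by simp only [hA]; positivity
  have hqA : q < A := by
    simp only [hA]
    rw [lt_div_iff₀ (by positivity)]
    nlinarith
  have hth := theta_le_jensen m hγ1 hγ2 hq0.le hq1.le
  have hbpos : 0 < beta (m+1) γ q := mul_pos hq0 (theta_pos (by omega) γ hq0 hq1.le)
  have hble : beta (m+1) γ q ≤ q * A ^ (γ - 1) := by
    unfold beta
    exact mul_le_mul_of_nonneg_left hth hq0.le
  have step1 : beta (m+1) γ q ^ (1/γ) ≤ (q * A ^ (γ-1)) ^ (1/γ) :=
    Real.rpow_le_rpow hbpos.le hble (by positivity)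
  have step2 : (q * A ^ (γ-1)) ^ (1/γ) = q ^ (1/γ) * A ^ ((γ-1)/γ) := by
    rw [Real.mul_rpow hq0.le (by positivity), ← Real.rpow_mul hA0.le]
    ring_nf
  have step3 : q ^ (1/γ) * A ^ ((γ-1)/γ) < (1/γ) * q + (1 - 1/γ) * A := by
    have h1 : (γ-1)/γ = 1 - 1/γ := by field_simp
    rw [h1]
    exact amgm2_strict hq0 hA0 hqA.ne (by positivity) (by
      rw [div_lt_one hγ0]; linarith)
  have step4 : (1/γ) * q + (1 - 1/γ) * A = q + (γ - 1) / γ * ((1 - q) / (↑(m+1))) := by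
    simp only [hA]
    push_cast
    field_simp
    ring
  calc beta (m+1) γ q ^ (1/γ) ≤ q ^ (1/γ) * A ^ ((γ-1)/γ) := by rw [← step2]; exact step1
    _ < (1/γ) * q + (1 - 1/γ) * A := step3
    _ = q + (γ - 1) / γ * ((1 - q) / (↑(m+1))) := step4


/-- for `1 < γ ≤ 2`, the indifference annuity loading `δ` satisfies
`δ < (1/n)(c₀/r - 1)`. -/
theorem indifference_loading_bound
    (n : ℕ) (hn : 2 ≤ n) (γ : ℝ) (hγ1 : 1 < γ) (hγ2 : γ ≤ 2)
    (r : ℝ) (hr : 0 < r)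
    (p : ℝ → ℝ) (hcont : Continuous p) (hanti : StrictAntiOn p (Set.Ici 0))
    (hmem : ∀ t, 0 ≤ t → p t ∈ Set.Ioc (0 : ℝ) 1) (hp0 : p 0 = 1)
    (hlt1 : ∀ t, 0 < t → p t < 1)
    (hlim : Filter.Tendsto p Filter.atTop (nhds 0))
    (c₀ : ℝ) (hc₀ : c₀ = (∫ t in Set.Ioi (0 : ℝ), Real.exp (-r * t) * p t)⁻¹)
    (δ : ℝ)
    (hδ : δ = 1 -
      (c₀ * ∫ t in Set.Ioi (0 : ℝ), Real.exp (-r * t) * beta n γ (p t) ^ (1 / γ)) ^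
        (γ / (1 - γ))) :
    δ < (1 / (n : ℝ)) * (c₀ / r - 1) := by
  have hγ0 : (0:ℝ) < γ := by linarith
  have hn0 : (0:ℝ) < (n:ℝ) := by exact_mod_cast (by omega : 0 < n)
  set J := ∫ t in Set.Ioi (0 : ℝ), Real.exp (-r * t) * p t with hJ
  set I := ∫ t in Set.Ioi (0 : ℝ), Real.exp (-r * t) * beta n γ (p t) ^ (1 / γ) with hI
  -- continuity facts
  have hbetac : Continuous fun t => beta n γ (p t) := by
    unfold beta theta
    fun_prop
  have hFc : Continuous fun t => Real.exp (-r * t) * beta n γ (p t) ^ (1 / γ) := by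
    apply Continuous.mul (by fun_prop)
    exact hbetac.rpow_const fun x => Or.inr (by positivity)
  have hec : Continuous fun t : ℝ => Real.exp (-r * t) := by fun_prop
  -- integrability of the exponential
  have hKint : IntegrableOn (fun t : ℝ => Real.exp (-r * t)) (Set.Ioi 0) := by
    simpa [neg_mul] using exp_neg_integrableOn_Ioi 0 hr
  have hK : ∫ t in Set.Ioi (0:ℝ), Real.exp (-r * t) = 1 / r := by
    have h0 := integral_comp_mul_left_Ioi (fun x => Real.exp (-x)) 0 hr
    simp only [mul_zero, integral_exp_neg_Ioi_zero, smul_eq_mul, mul_one] at h0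
    simp_rw [neg_mul]
    rw [h0, one_div]
  -- pointwise facts
  have hbeta_pos : ∀ t, 0 < t → 0 < beta n γ (p t) := fun t ht =>
    mul_pos (hmem t ht.le).1 (theta_pos (by omega) γ (hmem t ht.le).1 (hmem t ht.le).2)
  have hbeta_le : ∀ t, 0 < t → beta n γ (p t) ≤ 1 := by
    intro t ht
    have h1 := (hmem t ht.le)
    have h2 := theta_le_one (n := n) (by omega) hγ1.le h1.1.le h1.2
    have h3 := theta_pos (n := n) (by omega) γ h1.1 h1.2
    calc beta n γ (p t) = p t * theta n γ (p t) := rfl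
      _ ≤ 1 * 1 := by
          apply mul_le_mul h1.2 h2 h3.le zero_le_one
      _ = 1 := by norm_num
  -- integrability of J and I integrands
  have hJint : IntegrableOn (fun t => Real.exp (-r * t) * p t) (Set.Ioi 0) := by
    apply hKint.mono' ((hec.mul hcont).aestronglyMeasurable)
    filter_upwards [ae_restrict_mem measurableSet_Ioi] with t ht
    have hp := hmem t (le_of_lt ht)
    rw [Pi.mul_apply, Real.norm_eq_abs, abs_of_nonneg (mul_nonneg (Real.exp_pos _).le hp.1.le)]
    exact mul_le_of_le_one_right (Real.exp_pos _).le hp.2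
  have hFint : IntegrableOn (fun t => Real.exp (-r * t) * beta n γ (p t) ^ (1 / γ))
      (Set.Ioi 0) := by
    apply hKint.mono' hFc.aestronglyMeasurable
    filter_upwards [ae_restrict_mem measurableSet_Ioi] with t ht
    have h1 : 0 < beta n γ (p t) ^ (1 / γ) :=
      Real.rpow_pos_of_pos (hbeta_pos t ht) _
    have h2 : beta n γ (p t) ^ (1 / γ) ≤ 1 :=
      Real.rpow_le_one (hbeta_pos t ht).le (hbeta_le t ht) (by positivity)
    rw [Real.norm_eq_abs, abs_of_nonneg (mul_nonneg (Real.exp_pos _).le h1.le)]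
    exact mul_le_of_le_one_right (Real.exp_pos _).le h2
  -- positivity of J and I
  have hJpos : 0 < J := by
    rw [hJ, setIntegral_pos_iff_support_of_nonneg_ae ?_ hJint]
    · refine lt_of_lt_of_le ?_ (measure_mono (fun t ht =>
        ⟨ne_of_gt (mul_pos (Real.exp_pos _) (hmem t (le_of_lt ht)).1), ht⟩ :
        Set.Ioi (0:ℝ) ⊆ (Function.support fun t => Real.exp (-r * t) * p t) ∩ Set.Ioi 0))
      simp [Real.volume_Ioi]
    · filter_upwards [ae_restrict_mem measurableSet_Ioi] with t ht
      exact (mul_pos (Real.exp_pos _) (hmem t (le_of_lt ht)).1).le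
  have hIpos : 0 < I := by
    rw [hI, setIntegral_pos_iff_support_of_nonneg_ae ?_ hFint]
    · refine lt_of_lt_of_le ?_ (measure_mono (fun t ht =>
        ⟨ne_of_gt (mul_pos (Real.exp_pos _) (Real.rpow_pos_of_pos (hbeta_pos t ht) _)), ht⟩ :
        Set.Ioi (0:ℝ) ⊆ (Function.support fun t =>
          Real.exp (-r * t) * beta n γ (p t) ^ (1 / γ)) ∩ Set.Ioi 0))
      simp [Real.volume_Ioi]
    · filter_upwards [ae_restrict_mem measurableSet_Ioi] with t ht
      exact (mul_pos (Real.exp_pos _) (Real.rpow_pos_of_pos (hbeta_pos t ht) _)).le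
  -- the dominating function G
  set G : ℝ → ℝ := fun t => Real.exp (-r * t) * p t +
    (γ - 1) / γ * (1 / (n:ℝ)) * (Real.exp (-r * t) - Real.exp (-r * t) * p t) with hG
  have hG2int : IntegrableOn (fun t => (γ - 1) / γ * (1 / (n:ℝ)) *
      (Real.exp (-r * t) - Real.exp (-r * t) * p t)) (Set.Ioi 0) :=
    (hKint.sub hJint).const_mul _
  have hGint : IntegrableOn G (Set.Ioi 0) := hJint.add hG2int
  have hGval : ∫ t in Set.Ioi (0:ℝ), G t
      = J + (γ - 1) / γ * (1 / (n:ℝ)) * (1 / r - J) := by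
    rw [hG, integral_add hJint hG2int,
      integral_const_mul, integral_sub hKint hJint, hK, ← hJ]
  -- strict comparison between I and ∫ G
  have hIlt : I < ∫ t in Set.Ioi (0:ℝ), G t := by
    have hpos : 0 < ∫ t in Set.Ioi (0:ℝ),
        (G t - Real.exp (-r * t) * beta n γ (p t) ^ (1 / γ)) := by
      have hlt : ∀ t, 0 < t →
          Real.exp (-r * t) * beta n γ (p t) ^ (1 / γ) < G t := by
        intro t ht
        have hb := beta_rpow_lt hn hγ1 hγ2 (hmem t ht.le).1 (hlt1 t ht)
        have hGt : G t = Real.exp (-r * t) *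
            (p t + (γ - 1) / γ * ((1 - p t) / (n:ℝ))) := by
          rw [hG]; ring
        rw [hGt]
        exact mul_lt_mul_of_pos_left hb (Real.exp_pos _)
      have hGFint : IntegrableOn (fun t => G t -
          Real.exp (-r * t) * beta n γ (p t) ^ (1 / γ)) (Set.Ioi 0) := hGint.sub hFint
      rw [setIntegral_pos_iff_support_of_nonneg_ae ?_ hGFint]
      · refine lt_of_lt_of_le ?_ (measure_mono (fun t ht =>
          ⟨sub_ne_zero.mpr (ne_of_gt (hlt t ht)), ht⟩ :
          Set.Ioi (0:ℝ) ⊆ (Function.support fun t =>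
            G t - Real.exp (-r * t) * beta n γ (p t) ^ (1 / γ)) ∩ Set.Ioi 0))
        simp [Real.volume_Ioi]
      · filter_upwards [ae_restrict_mem measurableSet_Ioi] with t ht
        exact sub_nonneg.mpr (hlt t ht).le
    rw [integral_sub hGint hFint] at hpos
    rw [hI]
    linarith
  -- final arithmetic
  have hc0pos : 0 < c₀ := by rw [hc₀]; exact inv_pos.mpr hJpos
  have hc₀J : c₀ * J = 1 := by
    rw [hc₀]; exact inv_mul_cancel₀ hJpos.ne'
  have hs : γ / (1 - γ) < 0 := div_neg_of_pos_of_neg hγ0 (by linarith)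
  have hx : 0 < c₀ * I := mul_pos hc0pos hIpos
  have hbern := bern_neg hx hs
  have key1 : δ ≤ γ / (γ - 1) * (c₀ * I - 1) := by
    rw [hδ]
    have heq : γ / (γ - 1) * (c₀ * I - 1) = -(γ / (1 - γ) * (c₀ * I - 1)) := by
      have h1 : (1:ℝ) - γ = -(γ - 1) := by ring
      rw [h1, div_neg]
      ring
    rw [heq]
    linarith [hbern]
  have key2 : c₀ * I - 1 = c₀ * (I - J) := by rw [mul_sub, hc₀J]
  have key3 : I - J < (γ - 1) / γ * (1 / (n:ℝ)) * (1 / r - J) := by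
    rw [hGval] at hIlt; linarith
  have hfac : 0 < γ / (γ - 1) * c₀ :=
    mul_pos (div_pos hγ0 (by linarith)) hc0pos
  have hne1 : γ ≠ 0 := hγ0.ne'
  have hne2 : γ - 1 ≠ 0 := by linarith
  have hcanc : γ / (γ - 1) * ((γ - 1) / γ) = 1 := by
    field_simp
  calc δ ≤ γ / (γ - 1) * (c₀ * (I - J)) := by rw [← key2]; exact key1
    _ = (γ / (γ - 1) * c₀) * (I - J) := by ring
    _ < (γ / (γ - 1) * c₀) * ((γ - 1) / γ * (1 / (n:ℝ)) * (1 / r - J)) :=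
        mul_lt_mul_of_pos_left key3 hfac
    _ = (γ / (γ - 1) * ((γ - 1) / γ)) * (c₀ * (1 / (n:ℝ)) * (1 / r - J)) := by ring
    _ = 1 / (n:ℝ) * (c₀ / r - c₀ * J) := by rw [hcanc]; ring
    _ = 1 / (n:ℝ) * (c₀ / r - 1) := by rw [hc₀J]
end
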